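/- Let Y_t = E[G | 𝔽_t] be represented (deterministically in the operator part) as Y_t = −e^{(T−t)Aᵀ} E^{𝔽_t}[ξ] + ∫ₜᵀ e^{(s−t)Aᵀ} E^{𝔽_t}[f_s] ds, where ‖A e^{rA} D‖ ≤ C r^{α−1}. If E^{𝔽_t}|ξ| ≤ m₀ and (∫₀ᵀ E^{𝔽_t}|f_s|² ds)^{1/2} ≤ m₁, then for every u ∈ U with ‖u‖ = 1, |⟨Y_t, A e^{(T−t)A} D u⟩| is well-defined and sup_{‖u‖=1} |⟨Dᵀ Aᵀ Y_t, u⟩| ≤ C m₀ (T−t)^{α−1} + C' m₁ T^{α−1/2} with C' = C/(2α−1)^{1/2}. -/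

import Mathlib

open MeasureTheory
open scoped RealInnerProductSpace

/-- `Sadj r` represents `e^{r Aᵀ}`, `AD r` represents `A e^{rA} D` with the bound
`‖AD r‖ ≤ C r^{α−1}`, and the adjoint/semigroup relation
`⟪e^{rAᵀ} x, A e^{sA} D u⟫ = ⟪x, A e^{(r+s)A} D u⟫` holds. `ξt` and `ft` stand for the
conditional expectations `E^{𝔽_t}[ξ]` and `s ↦ E^{𝔽_t}[f_s]`, and
`Y = −e^{(T−t)Aᵀ} ξt + ∫ₜᵀ e^{(s−t)Aᵀ} ft s ds`.  The pairing
`u ↦ −⟪ξt, AD (T−t) u⟫ + ∫ₜᵀ ⟪ft s, AD (s−t) u⟫ ds` represents `u ↦ ⟪Dᵀ Aᵀ Y, u⟫`. -/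
theorem stmt14 {H U : Type*} [NormedAddCommGroup H] [InnerProductSpace ℝ H]
    [NormedAddCommGroup U] [InnerProductSpace ℝ U] [CompleteSpace H]
    (T t α C m₀ m₁ : ℝ) (hT : 0 < T) (ht0 : 0 ≤ t) (htT : t < T)
    (hα : 1 / 2 < α) (hα1 : α < 1) (hC : 0 < C) (hm₀ : 0 ≤ m₀) (hm₁ : 0 ≤ m₁)
    (Sadj : ℝ → H →L[ℝ] H) (AD : ℝ → U →L[ℝ] H)
    (hAD : ∀ r ∈ Set.Ioc (0:ℝ) T, ‖AD r‖ ≤ C * r ^ (α - 1))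
    (hadj : ∀ r s : ℝ, ∀ x : H, ∀ u : U, ⟪Sadj r x, AD s u⟫ = ⟪x, AD (r + s) u⟫)
    (ξt : H) (ft : ℝ → H) (Y : H)
    (hY : Y = -Sadj (T - t) ξt + ∫ s in t..T, Sadj (s - t) (ft s))
    (hξ : ‖ξt‖ ≤ m₀) (hf : (∫ s in t..T, ‖ft s‖ ^ 2) ^ ((1:ℝ)/2) ≤ m₁)
    (hfi : IntervalIntegrable ft volume t T)
    (hfi2 : IntervalIntegrable (fun s => ‖ft s‖ ^ 2) volume t T) :
    ∀ u : U, ‖u‖ = 1 →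
      |(-⟪ξt, AD (T - t) u⟫ + ∫ s in t..T, ⟪ft s, AD (s - t) u⟫)| ≤
        C * m₀ * (T - t) ^ (α - 1) +
          (C / (2 * α - 1) ^ ((1:ℝ)/2)) * m₁ * T ^ (α - 1/2) := by
  intro u hu
  have hTt : (0:ℝ) < T - t := by linarith
  have hα2 : (0:ℝ) < 2 * α - 1 := by linarith
  have h2a : (-1:ℝ) < 2 * α - 2 := by linarith
  -- first term bound
  have h1 : |⟪ξt, AD (T - t) u⟫| ≤ C * m₀ * (T - t) ^ (α - 1) := by
    have hop : ‖AD (T - t) u‖ ≤ C * (T - t) ^ (α - 1) := by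
      calc ‖AD (T - t) u‖ ≤ ‖AD (T - t)‖ * ‖u‖ := (AD (T - t)).le_opNorm u
        _ = ‖AD (T - t)‖ := by rw [hu, mul_one]
        _ ≤ C * (T - t) ^ (α - 1) := hAD _ ⟨hTt, by linarith⟩
    calc |⟪ξt, AD (T - t) u⟫| ≤ ‖ξt‖ * ‖AD (T - t) u‖ := abs_real_inner_le_norm _ _
      _ ≤ m₀ * (C * (T - t) ^ (α - 1)) := by
          apply mul_le_mul hξ hop (norm_nonneg _) hm₀
      _ = C * m₀ * (T - t) ^ (α - 1) := by ring
  -- notation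
  set a : ℝ → ℝ := fun s => ‖ft s‖ with ha
  set b : ℝ → ℝ := fun s => (s - t) ^ (α - 1) with hb
  set μ : Measure ℝ := volume.restrict (Set.Ioc t T) with hμ
  have hb_meas : Measurable b := (measurable_id.sub_const t).pow measurable_const
  have key : ∀ s ∈ Set.Ioc t T, b s ^ (2:ℕ) = (s - t) ^ (2 * α - 2) := by
    intro s hs
    have h0 : (0:ℝ) ≤ s - t := by linarith [hs.1]
    rw [hb, ← Real.rpow_natCast ((s - t) ^ (α - 1)) 2, ← Real.rpow_mul h0]
    congr 1
    push_cast
    ring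
  -- integrability of b ^ 2
  have hbsq : Integrable (fun s => b s ^ (2:ℕ)) μ := by
    have h1' : IntervalIntegrable (fun x : ℝ => x ^ (2 * α - 2)) volume (0 : ℝ) (T - t) :=
      intervalIntegral.intervalIntegrable_rpow' h2a
    have h2' := h1'.comp_sub_right t
    simp only [zero_add, sub_add_cancel] at h2'
    have h3' : IntegrableOn (fun s : ℝ => (s - t) ^ (2 * α - 2)) (Set.Ioc t T) volume := h2'.1
    refine h3'.congr_fun (fun s hs => (key s hs).symm) measurableSet_Ioc
  -- Memℒp facts
  have ha_meas : AEStronglyMeasurable a μ := hfi.1.aestronglyMeasurable.norm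
  have ha2 : MemLp a 2 μ :=
    (memLp_two_iff_integrable_sq ha_meas).2 hfi2.1
  have hb2 : MemLp b 2 μ :=
    (memLp_two_iff_integrable_sq hb_meas.aestronglyMeasurable).2 hbsq
  -- integrability of the product a * b
  have hab_int : Integrable (fun s => a s * b s) μ := by
    refine Integrable.mono' (((hfi2.1).add hbsq).div_const 2)
      (ha_meas.mul hb_meas.aestronglyMeasurable) (ae_of_all _ fun s => ?_)
    have h := sq_nonneg (|a s| - |b s|)
    calc ‖a s * b s‖ = |a s| * |b s| := by rw [Real.norm_eq_abs, abs_mul]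
      _ ≤ (a s ^ 2 + b s ^ 2) / 2 := by nlinarith [sq_abs (a s), sq_abs (b s)]
  -- nonnegativity on Ioc
  have hb_nonneg : ∀ s ∈ Set.Ioc t T, 0 ≤ b s := fun s hs =>
    Real.rpow_nonneg (by linarith [hs.1]) _
  have hab_nonneg : 0 ≤ ∫ s, a s * b s ∂μ := by
    refine setIntegral_nonneg measurableSet_Ioc fun s hs => ?_
    exact mul_nonneg (norm_nonneg _) (hb_nonneg s hs)
  -- Hölder
  have hpq : Real.HolderConjugate 2 2 := Real.holderConjugate_iff.mpr ⟨one_lt_two, by norm_num⟩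
  have h2e : ENNReal.ofReal (2:ℝ) = 2 := by norm_num
  have holder : ∫ s, a s * b s ∂μ ≤
      (∫ s, a s ^ (2:ℝ) ∂μ) ^ ((1:ℝ)/2) * (∫ s, b s ^ (2:ℝ) ∂μ) ^ ((1:ℝ)/2) := by
    have := integral_mul_le_Lp_mul_Lq_of_nonneg hpq
      (ae_of_all _ fun s => norm_nonneg (ft s))
      ((ae_restrict_iff' measurableSet_Ioc).2 (ae_of_all _ hb_nonneg))
      (h2e ▸ ha2) (h2e ▸ hb2)
    simpa using this
  -- rpow 2 = pow 2
  have hrpow2 : ∀ x : ℝ, x ^ (2:ℝ) = x ^ (2:ℕ) := fun x => by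
    rw [← Real.rpow_natCast x 2]; norm_num
  -- bound the first Hölder factor
  have hfac1 : (∫ s, a s ^ (2:ℝ) ∂μ) ^ ((1:ℝ)/2) ≤ m₁ := by
    have : (∫ s, a s ^ (2:ℝ) ∂μ) = ∫ s in t..T, ‖ft s‖ ^ 2 := by
      rw [intervalIntegral.integral_of_le htT.le]
      simp_rw [hrpow2]
      rfl
    rw [this]; exact hf
  have hfac1_nonneg : (0:ℝ) ≤ (∫ s, a s ^ (2:ℝ) ∂μ) ^ ((1:ℝ)/2) :=
    Real.rpow_nonneg (by
      refine setIntegral_nonneg measurableSet_Ioc fun s hs => ?_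
      exact Real.rpow_nonneg (norm_nonneg _) _) _
  -- compute the second Hölder factor
  have hval : (∫ s, b s ^ (2:ℝ) ∂μ) = (T - t) ^ (2 * α - 1) / (2 * α - 1) := by
    have e1 : (∫ s, b s ^ (2:ℝ) ∂μ) = ∫ s in t..T, (s - t) ^ (2 * α - 2) := by
      rw [intervalIntegral.integral_of_le htT.le]
      refine setIntegral_congr_fun measurableSet_Ioc fun s hs => ?_
      rw [hrpow2]; exact key s hs
    rw [e1, intervalIntegral.integral_comp_sub_right (fun x => x ^ (2 * α - 2)) t]
    simp only [sub_self]
    rw [integral_rpow (Or.inl h2a)]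
    rw [Real.zero_rpow (by linarith : 2 * α - 2 + 1 ≠ 0)]
    ring_nf
  have hfac2 : (∫ s, b s ^ (2:ℝ) ∂μ) ^ ((1:ℝ)/2) ≤ T ^ (α - 1/2) / (2 * α - 1) ^ ((1:ℝ)/2) := by
    rw [hval, Real.div_rpow (Real.rpow_nonneg hTt.le _) hα2.le]
    gcongr
    calc ((T - t) ^ (2 * α - 1)) ^ ((1:ℝ)/2) = (T - t) ^ ((2 * α - 1) * ((1:ℝ)/2)) := by
          rw [← Real.rpow_mul hTt.le]
      _ = (T - t) ^ (α - 1/2) := by ring_nf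
      _ ≤ T ^ (α - 1/2) := by
          apply Real.rpow_le_rpow hTt.le (by linarith) (by linarith)
  have hfac2_nonneg : (0:ℝ) ≤ (∫ s, b s ^ (2:ℝ) ∂μ) ^ ((1:ℝ)/2) :=
    Real.rpow_nonneg (by
      refine setIntegral_nonneg measurableSet_Ioc fun s hs => ?_
      exact Real.rpow_nonneg (hb_nonneg s hs) _) _
  -- second term bound
  have h2 : |∫ s in t..T, ⟪ft s, AD (s - t) u⟫| ≤
      (C / (2 * α - 1) ^ ((1:ℝ)/2)) * m₁ * T ^ (α - 1/2) := by
    have hbound_int : IntervalIntegrable (fun s => C * (a s * b s)) volume t T := by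
      rw [intervalIntegrable_iff_integrableOn_Ioc_of_le htT.le]
      exact hab_int.const_mul C
    have h_ae : ∀ᵐ s ∂volume.restrict (Set.uIoc t T),
        ‖⟪ft s, AD (s - t) u⟫‖ ≤ C * (a s * b s) := by
      rw [Set.uIoc_of_le htT.le]
      refine (ae_restrict_iff' measurableSet_Ioc).2 (ae_of_all _ fun s hs => ?_)
      have hst : s - t ∈ Set.Ioc (0:ℝ) T := ⟨by linarith [hs.1], by linarith [hs.2]⟩
      calc ‖⟪ft s, AD (s - t) u⟫‖ ≤ ‖ft s‖ * ‖AD (s - t) u‖ := by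
            rw [Real.norm_eq_abs]; exact abs_real_inner_le_norm _ _
        _ ≤ ‖ft s‖ * (C * (s - t) ^ (α - 1)) := by
            refine mul_le_mul_of_nonneg_left ?_ (norm_nonneg _)
            calc ‖AD (s - t) u‖ ≤ ‖AD (s - t)‖ * ‖u‖ := (AD (s - t)).le_opNorm u
              _ = ‖AD (s - t)‖ := by rw [hu, mul_one]
              _ ≤ C * (s - t) ^ (α - 1) := hAD _ hst
        _ = C * (a s * b s) := by ring
    have hstep := intervalIntegral.norm_integral_le_abs_of_norm_le h_ae hbound_int
    have heq : (∫ s in t..T, C * (a s * b s)) = C * ∫ s, a s * b s ∂μ := by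
      rw [intervalIntegral.integral_of_le htT.le, integral_const_mul]
    calc |∫ s in t..T, ⟪ft s, AD (s - t) u⟫| ≤ |∫ s in t..T, C * (a s * b s)| := hstep
      _ = C * ∫ s, a s * b s ∂μ := by
          rw [heq, abs_of_nonneg (mul_nonneg hC.le hab_nonneg)]
      _ ≤ C * ((∫ s, a s ^ (2:ℝ) ∂μ) ^ ((1:ℝ)/2) * (∫ s, b s ^ (2:ℝ) ∂μ) ^ ((1:ℝ)/2)) :=
          mul_le_mul_of_nonneg_left holder hC.le
      _ ≤ C * (m₁ * (T ^ (α - 1/2) / (2 * α - 1) ^ ((1:ℝ)/2))) := by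
          refine mul_le_mul_of_nonneg_left ?_ hC.le
          exact mul_le_mul hfac1 hfac2 hfac2_nonneg hm₁
      _ = (C / (2 * α - 1) ^ ((1:ℝ)/2)) * m₁ * T ^ (α - 1/2) := by ring
  calc |(-⟪ξt, AD (T - t) u⟫ + ∫ s in t..T, ⟪ft s, AD (s - t) u⟫)|
      ≤ |(-⟪ξt, AD (T - t) u⟫)| + |∫ s in t..T, ⟪ft s, AD (s - t) u⟫| := abs_add_le _ _
    _ = |⟪ξt, AD (T - t) u⟫| + |∫ s in t..T, ⟪ft s, AD (s - t) u⟫| := by rw [abs_neg]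
    _ ≤ C * m₀ * (T - t) ^ (α - 1) +
        (C / (2 * α - 1) ^ ((1:ℝ)/2)) * m₁ * T ^ (α - 1/2) := add_le_add h1 h2
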